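/- Let K{X} be the free magma algebra with co-addition Δ, and for a monomial s ∈ M(X) let Δ_s: K{X} → K{X} be the linear map defined by Δ(f) = Σ_s Δ_s(f) ⊗ s (sum over all monomials s, including s = 1). Then Δ_{x_i} = D_i, the unique derivation of K{X} with D_i(x_i) = 1 and D_i(x_j) = 0 for j ≠ i. -/

import Mathlib

open scoped TensorProduct

noncomputable section

/-- The free unital magma algebra `K{X}`. -/
abbrev FreeMagmaAlgebra (K X : Type*) [Field K] : Type _ :=
  MonoidAlgebra K (WithOne (FreeMagma X))

/-- The generator of `K{X}` corresponding to a variable `x ∈ X`. -/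
def FreeMagmaAlgebra.gen (K : Type*) {X : Type*} [Field K] (x : X) : FreeMagmaAlgebra K X :=
  MonoidAlgebra.of K (WithOne (FreeMagma X)) (FreeMagma.of x)

/-- `Δ_s`: the coefficient of the monomial `s` in the second tensor slot of `Δ(f)`,
so that `Δ(f) = Σ_s Δ_s(f) ⊗ s`. -/
def DeltaS {K X : Type*} [Field K]
    (Δ : FreeMagmaAlgebra K X →ₗ[K] FreeMagmaAlgebra K X ⊗[K] FreeMagmaAlgebra K X)
    (s : WithOne (FreeMagma X)) : FreeMagmaAlgebra K X →ₗ[K] FreeMagmaAlgebra K X :=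
  (TensorProduct.rid K (FreeMagmaAlgebra K X)).toLinearMap ∘ₗ
    TensorProduct.map LinearMap.id
      (Finsupp.lapply s ∘ₗ (MonoidAlgebra.coeffLinearEquiv K).toLinearMap) ∘ₗ Δ

section Aux

lemma wo_factor_one {α : Type*} [Mul α] {s t : WithOne α} (h : s * t = 1) :
    s = 1 ∧ t = 1 := by
  revert h
  refine WithOne.cases_on s ?_ ?_ <;> [skip; intro a] <;>
    (refine WithOne.cases_on t ?_ ?_ <;> [skip; intro b]) <;> intro h <;>
    simp_all
  · rw [← WithOne.coe_mul] at h; exact absurd h WithOne.coe_ne_one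

lemma wo_factor_of {X : Type*} {i : X} {s t : WithOne (FreeMagma X)}
    (h : s * t = (FreeMagma.of i : FreeMagma X)) :
    (s = (FreeMagma.of i : FreeMagma X) ∧ t = 1) ∨
    (s = 1 ∧ t = (FreeMagma.of i : FreeMagma X)) := by
  revert h
  refine WithOne.cases_on s ?_ ?_ <;> [skip; intro a] <;>
    (refine WithOne.cases_on t ?_ ?_ <;> [skip; intro b]) <;> intro h
  · simp at h
  · rw [one_mul] at h; exact Or.inr ⟨rfl, h⟩
  · rw [mul_one] at h; exact Or.inl ⟨h, rfl⟩
  · rw [← WithOne.coe_mul] at h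
    have h2 := WithOne.coe_inj.mp h
    exact absurd h2 (by intro h3; cases h3)

variable {K X : Type*} [Field K]

lemma coeff_one_mul (b d : FreeMagmaAlgebra K X) : (b * d).coeff 1 = b.coeff 1 * d.coeff 1 := by
  induction b using MonoidAlgebra.induction_linear with
  | zero => simp
  | add f g hf hg =>
      rw [add_mul, MonoidAlgebra.coeff_add, MonoidAlgebra.coeff_add, Finsupp.add_apply, Finsupp.add_apply, hf, hg, add_mul]
  | single s k =>
    induction d using MonoidAlgebra.induction_linear with
    | zero => simp
    | add f g hf hg =>
        rw [mul_add, MonoidAlgebra.coeff_add, MonoidAlgebra.coeff_add, Finsupp.add_apply, Finsupp.add_apply, hf, hg, mul_add]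
    | single t l =>
      rw [MonoidAlgebra.single_mul_single]
      simp only [MonoidAlgebra.coeff_single]
      rcases eq_or_ne (s * t) 1 with h1 | h1
      · obtain ⟨rfl, rfl⟩ := wo_factor_one h1
        simp
      · rw [Finsupp.single_eq_of_ne' h1]
        have hs : s ≠ 1 ∨ t ≠ 1 := by
          by_contra hc
          push_neg at hc
          exact h1 (by rw [hc.1, hc.2, one_mul])
        rcases hs with hs | hs
        · rw [Finsupp.single_eq_of_ne' hs, zero_mul]
        · rw [Finsupp.single_eq_of_ne' hs, mul_zero]

lemma coeff_of_mul (i : X) (b d : FreeMagmaAlgebra K X) :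
    (b * d).coeff ((FreeMagma.of i : FreeMagma X) : WithOne (FreeMagma X)) =
      b.coeff ((FreeMagma.of i : FreeMagma X) : WithOne (FreeMagma X)) * d.coeff 1 +
      b.coeff 1 * d.coeff ((FreeMagma.of i : FreeMagma X) : WithOne (FreeMagma X)) := by
  induction b using MonoidAlgebra.induction_linear with
  | zero => simp
  | add f g hf hg =>
      rw [add_mul, MonoidAlgebra.coeff_add, Finsupp.add_apply, hf, hg, MonoidAlgebra.coeff_add, Finsupp.add_apply, Finsupp.add_apply]
      ring
  | single s k =>
    induction d using MonoidAlgebra.induction_linear with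
    | zero => simp
    | add f g hf hg =>
        rw [mul_add, MonoidAlgebra.coeff_add, Finsupp.add_apply, hf, hg, MonoidAlgebra.coeff_add, Finsupp.add_apply, Finsupp.add_apply]
        ring
    | single t l =>
      set xi : WithOne (FreeMagma X) := ((FreeMagma.of i : FreeMagma X) : WithOne (FreeMagma X))
      have hxi : xi ≠ 1 := WithOne.coe_ne_one
      rw [MonoidAlgebra.single_mul_single]
      simp only [MonoidAlgebra.coeff_single]
      rcases eq_or_ne (s * t) xi with h1 | h1
      · rcases wo_factor_of h1 with ⟨rfl, rfl⟩ | ⟨rfl, rfl⟩ <;>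
          rw [h1] <;>
          simp [Finsupp.single_apply, hxi, Ne.symm hxi, xi]
      · rw [Finsupp.single_eq_of_ne' h1]
        have hc1 : s ≠ xi ∨ t ≠ 1 := by
          by_contra hc; push_neg at hc
          exact h1 (by rw [hc.1, hc.2, mul_one])
        have hc2 : s ≠ 1 ∨ t ≠ xi := by
          by_contra hc; push_neg at hc
          exact h1 (by rw [hc.1, hc.2, one_mul])
        have z1 : Finsupp.single s k xi * Finsupp.single t l 1 = 0 := by
          rcases hc1 with h | h
          · rw [Finsupp.single_eq_of_ne' h, zero_mul]
          · rw [Finsupp.single_eq_of_ne' h, mul_zero]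
        have z2 : Finsupp.single s k 1 * Finsupp.single t l xi = 0 := by
          rcases hc2 with h | h
          · rw [Finsupp.single_eq_of_ne' h, zero_mul]
          · rw [Finsupp.single_eq_of_ne' h, mul_zero]
        rw [z1, z2, add_zero]

/-- The coefficient-extraction map on the tensor square. -/
def piS (K X : Type*) [Field K] (s : WithOne (FreeMagma X)) :
    FreeMagmaAlgebra K X ⊗[K] FreeMagmaAlgebra K X →ₗ[K] FreeMagmaAlgebra K X :=
  (TensorProduct.rid K (FreeMagmaAlgebra K X)).toLinearMap ∘ₗ
    TensorProduct.map LinearMap.id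
      (Finsupp.lapply s ∘ₗ (MonoidAlgebra.coeffLinearEquiv K).toLinearMap)

lemma piS_tmul (s : WithOne (FreeMagma X)) (a b : FreeMagmaAlgebra K X) :
    piS K X s (a ⊗ₜ b) = b.coeff s • a := by
  simp [piS, Finsupp.lapply]

lemma DeltaS_eq_piS (Δ : FreeMagmaAlgebra K X →ₗ[K] FreeMagmaAlgebra K X ⊗[K] FreeMagmaAlgebra K X)
    (s : WithOne (FreeMagma X)) (f : FreeMagmaAlgebra K X) :
    DeltaS Δ s f = piS K X s (Δ f) := rfl

lemma piS_one_mul (u v : FreeMagmaAlgebra K X ⊗[K] FreeMagmaAlgebra K X) :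
    piS K X 1 (u * v) = piS K X 1 u * piS K X 1 v := by
  induction u using TensorProduct.induction_on with
  | zero => simp
  | add x y hx hy => rw [add_mul, map_add, hx, hy, map_add, add_mul]
  | tmul a b =>
    induction v using TensorProduct.induction_on with
    | zero => simp
    | add x y hx hy => rw [mul_add, map_add, hx, hy, map_add, mul_add]
    | tmul c d =>
      rw [Algebra.TensorProduct.tmul_mul_tmul, piS_tmul, piS_tmul, piS_tmul,
        coeff_one_mul, smul_mul_smul_comm]

lemma piS_of_mul (i : X) (u v : FreeMagmaAlgebra K X ⊗[K] FreeMagmaAlgebra K X) :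
    piS K X ((FreeMagma.of i : FreeMagma X) : WithOne (FreeMagma X)) (u * v) =
      piS K X ((FreeMagma.of i : FreeMagma X) : WithOne (FreeMagma X)) u * piS K X 1 v +
      piS K X 1 u * piS K X ((FreeMagma.of i : FreeMagma X) : WithOne (FreeMagma X)) v := by
  induction u using TensorProduct.induction_on with
  | zero => simp
  | add x y hx hy =>
      rw [add_mul, map_add, hx, hy, map_add, map_add, add_mul, add_mul]
      abel
  | tmul a b =>
    induction v using TensorProduct.induction_on with
    | zero => simp
    | add x y hx hy =>
        rw [mul_add, map_add, hx, hy, map_add, map_add, mul_add, mul_add]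
        abel
    | tmul c d =>
      rw [Algebra.TensorProduct.tmul_mul_tmul]
      rw [piS_tmul, piS_tmul, piS_tmul, piS_tmul, piS_tmul]
      rw [coeff_of_mul, add_smul, smul_mul_smul_comm, smul_mul_smul_comm]

end Aux

theorem DeltaS_var_eq_derivation (K X : Type*) [Field K] [CharZero K] [DecidableEq X]
    (Δ : FreeMagmaAlgebra K X →ₗ[K] FreeMagmaAlgebra K X ⊗[K] FreeMagmaAlgebra K X)
    (hmul : ∀ f g : FreeMagmaAlgebra K X, Δ (f * g) = Δ f * Δ g)
    (hone : Δ 1 = 1 ⊗ₜ 1)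
    (hgen : ∀ x : X, Δ (FreeMagmaAlgebra.gen K x) =
      FreeMagmaAlgebra.gen K x ⊗ₜ 1 + 1 ⊗ₜ FreeMagmaAlgebra.gen K x)
    (i : X)
    (D : FreeMagmaAlgebra K X →ₗ[K] FreeMagmaAlgebra K X)
    (hD : ∀ f g : FreeMagmaAlgebra K X, D (f * g) = D f * g + f * D g)
    (hDi : D (FreeMagmaAlgebra.gen K i) = 1)
    (hDj : ∀ j : X, j ≠ i → D (FreeMagmaAlgebra.gen K j) = 0) :
    DeltaS Δ ((FreeMagma.of i : FreeMagma X) : WithOne (FreeMagma X)) = D := by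
  set xi : WithOne (FreeMagma X) := ((FreeMagma.of i : FreeMagma X) : WithOne (FreeMagma X))
    with hxi_def
  set E : FreeMagmaAlgebra K X →ₗ[K] FreeMagmaAlgebra K X := DeltaS Δ xi with hE_def
  set E₁ : FreeMagmaAlgebra K X →ₗ[K] FreeMagmaAlgebra K X := DeltaS Δ 1 with hE1_def
  -- basic coefficient facts
  have hone_coeff_one : (1 : FreeMagmaAlgebra K X).coeff 1 = 1 := by
    rw [MonoidAlgebra.one_def, MonoidAlgebra.coeff_single, Finsupp.single_eq_same]
  have hone_coeff_xi : (1 : FreeMagmaAlgebra K X).coeff xi = 0 := by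
    rw [MonoidAlgebra.one_def, MonoidAlgebra.coeff_single]
    exact Finsupp.single_eq_of_ne' (Ne.symm WithOne.coe_ne_one)
  have hgen_coeff_one : ∀ x : X,
      (FreeMagmaAlgebra.gen K x : FreeMagmaAlgebra K X).coeff 1 = 0 :=
    fun x => Finsupp.single_eq_of_ne' WithOne.coe_ne_one
  -- E₁ is multiplicative
  have hE1_mul : ∀ f g : FreeMagmaAlgebra K X, E₁ (f * g) = E₁ f * E₁ g := fun f g => by
    rw [hE1_def, DeltaS_eq_piS, DeltaS_eq_piS, DeltaS_eq_piS, hmul, piS_one_mul]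
  -- E₁ on 1 and generators
  have hE1_one : E₁ (1 : FreeMagmaAlgebra K X) = 1 := by
    rw [hE1_def, DeltaS_eq_piS, hone, piS_tmul, hone_coeff_one, one_smul]
  have hE1_gen : ∀ x : X, E₁ (FreeMagmaAlgebra.gen K x) = FreeMagmaAlgebra.gen K x := fun x => by
    rw [hE1_def, DeltaS_eq_piS, hgen x, map_add, piS_tmul, piS_tmul,
      hone_coeff_one, one_smul, hgen_coeff_one, zero_smul, add_zero]
  -- E₁ = id
  have hE1_single : ∀ m : WithOne (FreeMagma X),
      E₁ (MonoidAlgebra.single m (1 : K)) = MonoidAlgebra.single m 1 := by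
    intro m
    refine WithOne.cases_on m ?_ ?_
    · rw [← MonoidAlgebra.one_def]; exact hE1_one
    · intro w
      induction w with
      | ih1 x => exact hE1_gen x
      | ih2 a b iha ihb =>
        have hsplit : (MonoidAlgebra.single (↑(a * b) : WithOne (FreeMagma X)) (1 : K)
            : FreeMagmaAlgebra K X) =
            (MonoidAlgebra.single (↑a : WithOne (FreeMagma X)) (1 : K) : FreeMagmaAlgebra K X) *
              MonoidAlgebra.single (↑b : WithOne (FreeMagma X)) (1 : K) := by
          rw [MonoidAlgebra.single_mul_single, one_mul, WithOne.coe_mul]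
        rw [hsplit, hE1_mul, iha, ihb]
  have hE1_id : ∀ f : FreeMagmaAlgebra K X, E₁ f = f := by
    intro f
    induction f using MonoidAlgebra.induction_linear with
    | zero => simp
    | add f g hf hg => rw [map_add, hf, hg]
    | single m k =>
      have : (MonoidAlgebra.single m k : FreeMagmaAlgebra K X)
          = k • MonoidAlgebra.single m (1 : K) := by
        rw [MonoidAlgebra.smul_single, smul_eq_mul, mul_one]
      rw [this, map_smul, hE1_single]
  -- E is a derivation
  have hE_mul : ∀ f g : FreeMagmaAlgebra K X, E (f * g) = E f * g + f * E g := fun f g => by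
    have := piS_of_mul (K := K) (X := X) i (Δ f) (Δ g)
    rw [hE_def, DeltaS_eq_piS, hmul, this]
    rw [← DeltaS_eq_piS, ← DeltaS_eq_piS, ← DeltaS_eq_piS, ← DeltaS_eq_piS,
      ← hE1_def, ← hE_def, hE1_id, hE1_id]
  -- E on 1 and generators
  have hE_one : E (1 : FreeMagmaAlgebra K X) = 0 := by
    rw [hE_def, DeltaS_eq_piS, hone, piS_tmul, hone_coeff_xi, zero_smul]
  have hE_gen : ∀ j : X, E (FreeMagmaAlgebra.gen K j) = if j = i then 1 else 0 := by
    intro j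
    have hcoeff : (FreeMagmaAlgebra.gen K j : FreeMagmaAlgebra K X).coeff xi = if j = i then 1 else 0 := by
      rw [hxi_def]
      rcases eq_or_ne j i with rfl | hj
      · rw [if_pos rfl]
        exact Finsupp.single_eq_same
      · rw [if_neg hj]
        refine Finsupp.single_eq_of_ne' ?_
        intro hc
        exact hj (by cases WithOne.coe_inj.mp hc; rfl)
    rw [hE_def, DeltaS_eq_piS, hgen j, map_add, piS_tmul, piS_tmul,
      hone_coeff_xi, zero_smul, hcoeff, zero_add]
    rcases eq_or_ne j i with rfl | hj
    · rw [if_pos rfl, if_pos rfl, one_smul]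
    · rw [if_neg hj, if_neg hj, zero_smul]
  -- D on 1
  have hD_one : D (1 : FreeMagmaAlgebra K X) = 0 := by
    have h := hD 1 1
    rw [mul_one, mul_one, one_mul] at h
    exact (left_eq_add.mp h)
  -- conclude
  refine MonoidAlgebra.lhom_ext' fun m => LinearMap.ext fun k => ?_
  show E (MonoidAlgebra.single m k) = D (MonoidAlgebra.single m k)
  have hk : (MonoidAlgebra.single m k : FreeMagmaAlgebra K X)
      = k • MonoidAlgebra.single m (1 : K) := by
    rw [MonoidAlgebra.smul_single, smul_eq_mul, mul_one]
  rw [hk, map_smul, map_smul]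
  congr 1
  refine WithOne.cases_on m ?_ ?_
  · rw [← MonoidAlgebra.one_def]
    exact hE_one.trans hD_one.symm
  · intro w
    induction w with
    | ih1 x =>
      show E (FreeMagmaAlgebra.gen K x) = D (FreeMagmaAlgebra.gen K x)
      rcases eq_or_ne x i with rfl | hx
      · rw [hDi, hE_gen, if_pos rfl]
      · rw [hDj x hx, hE_gen, if_neg hx]
    | ih2 a b iha ihb =>
      have h2 := hE_mul (MonoidAlgebra.single (↑a : WithOne (FreeMagma X)) (1 : K))
        (MonoidAlgebra.single (↑b : WithOne (FreeMagma X)) (1 : K))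
      have h3 := hD (MonoidAlgebra.single (↑a : WithOne (FreeMagma X)) (1 : K))
        (MonoidAlgebra.single (↑b : WithOne (FreeMagma X)) (1 : K))
      have iha' : E (MonoidAlgebra.single (↑a : WithOne (FreeMagma X)) (1 : K)) =
          D (MonoidAlgebra.single (↑a : WithOne (FreeMagma X)) (1 : K)) := iha
      have ihb' : E (MonoidAlgebra.single (↑b : WithOne (FreeMagma X)) (1 : K)) =
          D (MonoidAlgebra.single (↑b : WithOne (FreeMagma X)) (1 : K)) := ihb
      rw [MonoidAlgebra.single_mul_single, one_mul, ← WithOne.coe_mul] at h2 h3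
      rw [iha', ihb'] at h2
      exact h2.trans h3.symm
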